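/- arXiv:2602.01557 — 2 statements merged into one kernel-verified Lean document; each statement's English description precedes it below -/
import Mathlib

section
/- Let ω be a unit vector in ℝ³ and θ ∈ (0, π/2). If x, y ∈ Ω_{ω,θ} and |y| ≥ |x| / cos θ, then ⟨x − y, ω⟩ ≤ (|x|/cos θ − |y|)·cos θ ≤ 0; in particular, if moreover x ≠ y, then x − y ∉ Ω_{ω,θ}. -/
noncomputable section

open Real
open scoped RealInnerProductSpace

/-- The cone `Ω_{ω,θ}` with vertex at the origin, axis `ω`, and opening angle `θ`:
all `x` whose angle with `ω` is at most `θ`, i.e. `⟨x, ω⟩ ≥ ‖x‖ cos θ`. -/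
def Cone (ω : EuclideanSpace ℝ (Fin 3)) (θ : ℝ) : Set (EuclideanSpace ℝ (Fin 3)) :=
  {x | ‖x‖ * Real.cos θ ≤ ⟪x, ω⟫}

theorem stmt_1 (ω : EuclideanSpace ℝ (Fin 3)) (hω : ‖ω‖ = 1) (θ : ℝ)
    (hθ : θ ∈ Set.Ioo 0 (Real.pi / 2))
    (x y : EuclideanSpace ℝ (Fin 3)) (hx : x ∈ Cone ω θ) (hy : y ∈ Cone ω θ)
    (hxy : ‖y‖ ≥ ‖x‖ / Real.cos θ) :
    ⟪x - y, ω⟫ ≤ (‖x‖ / Real.cos θ - ‖y‖) * Real.cos θ ∧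
      (‖x‖ / Real.cos θ - ‖y‖) * Real.cos θ ≤ 0 ∧
      (x ≠ y → x - y ∉ Cone ω θ) := by
  have hcos : 0 < Real.cos θ := Real.cos_pos_of_mem_Ioo ⟨by linarith [Real.pi_pos, hθ.1], hθ.2⟩
  have hxω : ⟪x, ω⟫ ≤ ‖x‖ := by
    calc ⟪x, ω⟫ ≤ ‖x‖ * ‖ω‖ := real_inner_le_norm x ω
    _ = ‖x‖ := by rw [hω, mul_one]
  have hyω : ‖y‖ * Real.cos θ ≤ ⟪y, ω⟫ := hy
  have key : ⟪x - y, ω⟫ ≤ (‖x‖ / Real.cos θ - ‖y‖) * Real.cos θ := by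
    rw [inner_sub_left]
    have : (‖x‖ / Real.cos θ - ‖y‖) * Real.cos θ = ‖x‖ - ‖y‖ * Real.cos θ := by
      field_simp
    rw [this]
    linarith
  have h2 : (‖x‖ / Real.cos θ - ‖y‖) * Real.cos θ ≤ 0 :=
    mul_nonpos_of_nonpos_of_nonneg (by linarith) hcos.le
  refine ⟨key, h2, fun hne hmem => ?_⟩
  have hxy0 : x - y ≠ 0 := sub_ne_zero.mpr hne
  have hpos : 0 < ‖x - y‖ * Real.cos θ :=
    mul_pos (norm_pos_iff.mpr hxy0) hcos
  have : ‖x - y‖ * Real.cos θ ≤ ⟪x - y, ω⟫ := hmem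
  linarith
end
end

section
/- Let ω = (0,0,1), θ ∈ (π/3, π/2), and α ∈ (π − 2θ, θ) (this interval is nonempty since θ > π/3). Set x := (0,0,1) and, for r > 0, y_r := (r sin α, 0, r cos α). Then x ∈ Ω_{ω,θ} and y_r ∈ Ω_{ω,θ} for every r > 0, and there exists ε > 0 such that for every r ∈ (1, 1+ε] one has |y_r| > |x| and x − y_r ∈ Ω_{ω,θ}. In particular, the condition |y| > |x| alone does not imply x − y ∉ Ω_{ω,θ}. -/
noncomputable section

open Real
open scoped RealInnerProductSpace

/-- The vector `(0,0,1)` in `ℝ³`. -/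
def e3 : EuclideanSpace ℝ (Fin 3) := (WithLp.equiv 2 (Fin 3 → ℝ)).symm ![0, 0, 1]

/-- The point `y_r = (r sin α, 0, r cos α)` in `ℝ³`. -/
def yPt (r α : ℝ) : EuclideanSpace ℝ (Fin 3) :=
  (WithLp.equiv 2 (Fin 3 → ℝ)).symm ![r * Real.sin α, 0, r * Real.cos α]

lemma norm_e3 : ‖e3‖ = 1 := by
  simp [e3, EuclideanSpace.norm_eq, Fin.sum_univ_three]

lemma inner_e3_e3 : ⟪e3, e3⟫ = (1:ℝ) := by
  simp [e3, PiLp.inner_apply, Fin.sum_univ_three, EuclideanSpace.norm_eq]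

lemma inner_yPt_e3 (r α : ℝ) : ⟪yPt r α, e3⟫ = r * Real.cos α := by
  simp [yPt, e3, PiLp.inner_apply, Fin.sum_univ_three]

lemma inner_sub_e3 (r α : ℝ) : ⟪e3 - yPt r α, e3⟫ = 1 - r * Real.cos α := by
  simp [yPt, e3, PiLp.inner_apply, Fin.sum_univ_three]

lemma norm_yPt (r α : ℝ) (hr : 0 ≤ r) : ‖yPt r α‖ = r := by
  simp [yPt, EuclideanSpace.norm_eq, Fin.sum_univ_three]
  rw [show (r*Real.sin α)^2 + (r*Real.cos α)^2 = r^2 by nlinarith [Real.sin_sq_add_cos_sq α]]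
  exact Real.sqrt_sq hr

lemma norm_sub_yPt (r α : ℝ) : ‖e3 - yPt r α‖ = Real.sqrt (1 + r^2 - 2*r*Real.cos α) := by
  simp [yPt, e3, EuclideanSpace.norm_eq, Fin.sum_univ_three]
  rw [show (r*Real.sin α)^2 + (1 - r*Real.cos α)^2 = 1 + r^2 - 2*r*Real.cos α by
    nlinarith [Real.sin_sq_add_cos_sq α]]

theorem stmt_2 (θ α : ℝ) (hθ : θ ∈ Set.Ioo (Real.pi / 3) (Real.pi / 2))
    (hα : α ∈ Set.Ioo (Real.pi - 2 * θ) θ) :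
    e3 ∈ Cone e3 θ ∧
    (∀ r : ℝ, 0 < r → yPt r α ∈ Cone e3 θ) ∧
    ∃ ε > 0, ∀ r ∈ Set.Ioc (1 : ℝ) (1 + ε),
      ‖yPt r α‖ > ‖e3‖ ∧ e3 - yPt r α ∈ Cone e3 θ := by
  obtain ⟨hθ1, hθ2⟩ := hθ
  obtain ⟨hα1, hα2⟩ := hα
  have hπ := Real.pi_pos
  have hα0 : 0 < α := by linarith
  have hαπ2 : α < π / 2 := lt_trans hα2 hθ2
  have hk0 : 0 < Real.cos θ := Real.cos_pos_of_mem_Ioo ⟨by linarith, hθ2⟩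
  have hck : Real.cos θ < Real.cos α :=
    Real.cos_lt_cos_of_nonneg_of_le_pi hα0.le (by linarith) hα2
  -- sin (α/2) > cos θ
  have hsin : Real.cos θ < Real.sin (α / 2) := by
    rw [← Real.sin_pi_div_two_sub θ]
    exact Real.sin_lt_sin_of_lt_of_le_pi_div_two (by linarith) (by linarith) (by linarith)
  have hsin0 : 0 < Real.sin (α / 2) := lt_trans hk0 hsin
  refine ⟨?_, ?_, ?_⟩
  · show ‖e3‖ * Real.cos θ ≤ ⟪e3, e3⟫
    rw [norm_e3, inner_e3_e3]
    nlinarith [Real.cos_le_one θ]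
  · intro r hr
    show ‖yPt r α‖ * Real.cos θ ≤ ⟪yPt r α, e3⟫
    rw [norm_yPt r α hr.le, inner_yPt_e3]
    nlinarith
  · -- continuity argument
    set c := Real.cos α with hc
    set k := Real.cos θ with hk
    set f : ℝ → ℝ := fun r => (1 - r * c) - k * Real.sqrt (1 + r^2 - 2*r*c) with hf
    have hfc : ContinuousAt f 1 := by fun_prop
    have hf1 : 0 < f 1 := by
      have h2 : Real.sqrt (1 + 1^2 - 2*1*c) = 2 * Real.sin (α/2) := by
        have hdouble : Real.cos α = 1 - 2 * Real.sin (α/2)^2 := by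
          have h := Real.sin_sq (α/2)
          have h2m := Real.cos_two_mul (α/2)
          rw [show 2*(α/2) = α by ring] at h2m
          linarith
        rw [show 1 + 1^2 - 2*1*c = (2 * Real.sin (α/2))^2 by rw [hc, hdouble]; ring]
        exact Real.sqrt_sq (by positivity)
      have h1c : 1 - c = 2 * Real.sin (α/2)^2 := by
        have hdouble : Real.cos α = 1 - 2 * Real.sin (α/2)^2 := by
          have h := Real.sin_sq (α/2)
          have h2m := Real.cos_two_mul (α/2)
          rw [show 2*(α/2) = α by ring] at h2m
          linarith
        rw [hc, hdouble]; ring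
      simp only [hf]
      rw [h2]
      nlinarith
    have hev : ∀ᶠ r in nhds (1:ℝ), 0 < f r := hfc.eventually (eventually_gt_nhds hf1)
    obtain ⟨δ, hδ0, hδ⟩ := Metric.eventually_nhds_iff.mp hev
    refine ⟨δ/2, by positivity, ?_⟩
    rintro r ⟨hr1, hr2⟩
    have hfr : 0 < f r := hδ (by rw [Real.dist_eq, abs_of_pos (by linarith)]; linarith)
    constructor
    · rw [norm_e3, norm_yPt r α (by linarith)]; exact hr1
    · show ‖e3 - yPt r α‖ * k ≤ ⟪e3 - yPt r α, e3⟫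
      rw [norm_sub_yPt, inner_sub_e3]
      simp only [hf] at hfr
      nlinarith [Real.sqrt_nonneg (1 + r^2 - 2*r*c)]
end
end
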